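/- For any probability measure D on X×Y and any probability measure Q on H, the risk of the Q-weighted majority vote is at most four times the expected joint error: r^MV_D(Q) ≤ 4·e_D(Q). -/

import Mathlib

open MeasureTheory
open scoped ENNReal

variable {X H : Type*} [MeasurableSpace X] [MeasurableSpace H]

/-- Gibbs risk: `r_D(Q) = E_{h~Q} P_{(x,y)~D}[h(x) ≠ y]`. -/
noncomputable def gibbsRisk (D : Measure (X × ℝ)) (Q : Measure H) (f : H → X → ℝ) : ℝ :=
  ∫ h, (D {p | f h p.1 ≠ p.2}).toReal ∂Q

/-- Expected disagreement: `d_D(Q) = E_{h1~Q} E_{h2~Q} P_{x~D_X}[h1(x) ≠ h2(x)]`. -/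
noncomputable def disagreement (D : Measure (X × ℝ)) (Q : Measure H) (f : H → X → ℝ) : ℝ :=
  ∫ h₁, ∫ h₂, ((D.map Prod.fst) {x | f h₁ x ≠ f h₂ x}).toReal ∂Q ∂Q

/-- Expected joint error: `e_D(Q) = E_{h1~Q} E_{h2~Q} P_{(x,y)~D}[h1(x) ≠ y ∧ h2(x) ≠ y]`. -/
noncomputable def jointError (D : Measure (X × ℝ)) (Q : Measure H) (f : H → X → ℝ) : ℝ :=
  ∫ h₁, ∫ h₂, (D {p | f h₁ p.1 ≠ p.2 ∧ f h₂ p.1 ≠ p.2}).toReal ∂Q ∂Q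


/-- Majority vote risk (ties count as errors): `r^MV_D(Q) = P_{(x,y)~D}[y·E_{h~Q}[h(x)] ≤ 0]`. -/
noncomputable def mvRisk (D : Measure (X × ℝ)) (Q : Measure H) (f : H → X → ℝ) : ℝ :=
  (D {p | p.2 * ∫ h, f h p.1 ∂Q ≤ 0}).toReal

/-- The risk of the Q-weighted majority vote is at most four times the expected joint error. -/
theorem mvRisk_le_four_jointError
    (D : Measure (X × ℝ)) [IsProbabilityMeasure D]
    (Q : Measure H) [IsProbabilityMeasure Q]
    (f : H → X → ℝ)
    (hf : Measurable fun p : H × X => f p.1 p.2)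
    (hvals : ∀ h x, f h x = 1 ∨ f h x = -1)
    (hlabels : ∀ᵐ p ∂D, p.2 = 1 ∨ p.2 = -1) :
    mvRisk D Q f ≤ 4 * jointError D Q f := by
  classical
  have hg : Measurable fun q : H × (X × ℝ) => f q.1 q.2.1 :=
    hf.comp (measurable_fst.prodMk (measurable_fst.comp measurable_snd))
  have hM : MeasurableSet {q : H × (X × ℝ) | f q.1 q.2.1 ≠ q.2.2} := by
    have h1 := measurableSet_eq_fun hg
      (measurable_snd.comp measurable_snd : Measurable fun q : H × (X × ℝ) => q.2.2)
    have h2 : {q : H × (X × ℝ) | f q.1 q.2.1 ≠ q.2.2}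
        = {q : H × (X × ℝ) | f q.1 q.2.1 = q.2.2}ᶜ := rfl
    rw [h2]; exact h1.compl
  set M := {q : H × (X × ℝ) | f q.1 q.2.1 ≠ q.2.2} with hMdef
  have hN : ∀ p : X × ℝ, MeasurableSet {h | f h p.1 ≠ p.2} := fun p =>
    measurable_prodMk_right hM
  have hA : ∀ h : H, MeasurableSet {p : X × ℝ | f h p.1 ≠ p.2} := fun h =>
    measurable_prodMk_left hM
  set w : X × ℝ → ℝ≥0∞ := fun p => Q {h | f h p.1 ≠ p.2} with hwdef
  have hind : Measurable (M.indicator (1 : H × (X × ℝ) → ℝ≥0∞)) :=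
    measurable_one.indicator hM
  have key : ∀ p : X × ℝ, (∫⁻ h, M.indicator 1 (h, p) ∂Q) = w p := by
    intro p
    show _ = Q {h | f h p.1 ≠ p.2}
    rw [← lintegral_indicator_one (hN p)]
    refine lintegral_congr fun h => ?_
    by_cases hh : f h p.1 ≠ p.2 <;>
      simp [hMdef, Set.indicator_apply, Set.mem_setOf_eq, hh]
  have hw : Measurable w := by
    have h1 : Measurable fun p : X × ℝ => ∫⁻ h, M.indicator 1 (h, p) ∂Q :=
      Measurable.lintegral_prod_left (f := fun h p => M.indicator 1 (h, p)) hind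
    simpa only [key] using h1
  set F : H → H → ℝ≥0∞ := fun h₁ h₂ =>
    D {p : X × ℝ | f h₁ p.1 ≠ p.2 ∧ f h₂ p.1 ≠ p.2} with hFdef
  have hAB : ∀ h₁ h₂ : H, MeasurableSet {p : X × ℝ | f h₁ p.1 ≠ p.2 ∧ f h₂ p.1 ≠ p.2} := by
    intro h₁ h₂
    have : {p : X × ℝ | f h₁ p.1 ≠ p.2 ∧ f h₂ p.1 ≠ p.2}
        = {p : X × ℝ | f h₁ p.1 ≠ p.2} ∩ {p : X × ℝ | f h₂ p.1 ≠ p.2} := rfl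
    rw [this]; exact (hA h₁).inter (hA h₂)
  have Frep : ∀ h₁ h₂ : H, F h₁ h₂
      = ∫⁻ p, M.indicator 1 (h₁, p) * M.indicator 1 (h₂, p) ∂D := by
    intro h₁ h₂
    show D {p : X × ℝ | f h₁ p.1 ≠ p.2 ∧ f h₂ p.1 ≠ p.2} = _
    rw [← lintegral_indicator_one (hAB h₁ h₂)]
    refine lintegral_congr fun p => ?_
    by_cases h1 : f h₁ p.1 ≠ p.2 <;> by_cases h2 : f h₂ p.1 ≠ p.2 <;>
      simp [hMdef, Set.indicator_apply, Set.mem_setOf_eq, h1, h2]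
  have hFm : Measurable (Function.uncurry F) := by
    have hi : Measurable (Function.uncurry fun (hh : H × H) (p : X × ℝ) =>
        M.indicator (1 : H × (X × ℝ) → ℝ≥0∞) (hh.1, p) * M.indicator 1 (hh.2, p)) :=
      (hind.comp ((measurable_fst.comp measurable_fst).prodMk measurable_snd)).mul
        (hind.comp ((measurable_snd.comp measurable_fst).prodMk measurable_snd))
    have h2 : Measurable fun hh : H × H =>
        ∫⁻ p, M.indicator 1 (hh.1, p) * M.indicator 1 (hh.2, p) ∂D :=
      Measurable.lintegral_prod_right
        (f := fun (hh : H × H) p => M.indicator 1 (hh.1, p) * M.indicator 1 (hh.2, p)) hi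
    have : (Function.uncurry F) = fun hh : H × H =>
        ∫⁻ p, M.indicator 1 (hh.1, p) * M.indicator 1 (hh.2, p) ∂D := by
      funext hh; exact Frep hh.1 hh.2
    rw [this]; exact h2
  -- jointError as lintegral
  have hJ : jointError D Q f = (∫⁻ h₁, ∫⁻ h₂, F h₁ h₂ ∂Q ∂Q).toReal := by
    have inner : ∀ h₁, ∫ h₂, (F h₁ h₂).toReal ∂Q = (∫⁻ h₂, F h₁ h₂ ∂Q).toReal := fun h₁ =>
      integral_toReal ((hFm.comp measurable_prodMk_left).aemeasurable)
        (ae_of_all _ fun h₂ => lt_of_le_of_lt prob_le_one ENNReal.one_lt_top)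
    have hLm : Measurable fun h₁ => ∫⁻ h₂, F h₁ h₂ ∂Q :=
      Measurable.lintegral_prod_right hFm
    have hLb : ∀ h₁, (∫⁻ h₂, F h₁ h₂ ∂Q) ≤ 1 := by
      intro h₁
      calc ∫⁻ h₂, F h₁ h₂ ∂Q ≤ ∫⁻ _, 1 ∂Q := lintegral_mono fun h₂ => prob_le_one
        _ = 1 := by simp
    have outer : ∫ h₁, (∫⁻ h₂, F h₁ h₂ ∂Q).toReal ∂Q
        = (∫⁻ h₁, ∫⁻ h₂, F h₁ h₂ ∂Q ∂Q).toReal :=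
      integral_toReal hLm.aemeasurable
        (ae_of_all _ fun h₁ => lt_of_le_of_lt (hLb h₁) ENNReal.one_lt_top)
    calc jointError D Q f = ∫ h₁, ∫ h₂, (F h₁ h₂).toReal ∂Q ∂Q := rfl
      _ = ∫ h₁, (∫⁻ h₂, F h₁ h₂ ∂Q).toReal ∂Q := by simp only [inner]
      _ = _ := outer
  -- Fubini
  have step1 : ∀ h₁, ∫⁻ h₂, F h₁ h₂ ∂Q = ∫⁻ p, M.indicator 1 (h₁, p) * w p ∂D := by
    intro h₁
    calc ∫⁻ h₂, F h₁ h₂ ∂Q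
        = ∫⁻ h₂, ∫⁻ p, M.indicator 1 (h₁, p) * M.indicator 1 (h₂, p) ∂D ∂Q := by
          simp only [Frep]
      _ = ∫⁻ p, ∫⁻ h₂, M.indicator 1 (h₁, p) * M.indicator 1 (h₂, p) ∂Q ∂D := by
          refine lintegral_lintegral_swap ?_
          exact ((hind.comp (measurable_const.prodMk measurable_snd)).mul
            (hind.comp (measurable_fst.prodMk measurable_snd))).aemeasurable
      _ = ∫⁻ p, M.indicator 1 (h₁, p) * w p ∂D := by
          refine lintegral_congr fun p => ?_
          have hmeas : Measurable fun h : H => M.indicator (1 : H × (X × ℝ) → ℝ≥0∞) (h, p) :=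
            hind.comp measurable_prodMk_right
          rw [lintegral_const_mul _ hmeas, key p]
  have hswap : (∫⁻ h₁, ∫⁻ h₂, F h₁ h₂ ∂Q ∂Q) = ∫⁻ p, (w p) ^ 2 ∂D := by
    calc ∫⁻ h₁, ∫⁻ h₂, F h₁ h₂ ∂Q ∂Q
        = ∫⁻ h₁, ∫⁻ p, M.indicator 1 (h₁, p) * w p ∂D ∂Q := by simp only [step1]
      _ = ∫⁻ p, ∫⁻ h₁, M.indicator 1 (h₁, p) * w p ∂Q ∂D := by
          refine lintegral_lintegral_swap ?_
          exact ((hind.comp (measurable_fst.prodMk measurable_snd)).mul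
            (hw.comp measurable_snd)).aemeasurable
      _ = ∫⁻ p, (w p) ^ 2 ∂D := by
          refine lintegral_congr fun p => ?_
          have hmeas : Measurable fun h : H => M.indicator (1 : H × (X × ℝ) → ℝ≥0∞) (h, p) :=
            hind.comp measurable_prodMk_right
          rw [lintegral_mul_const _ hmeas, key p]
          exact (pow_two _).symm
  -- the "half" threshold set
  set S : Set (X × ℝ) := {p | ENNReal.ofReal (1 / 2) ≤ w p} with hSdef
  have hS : MeasurableSet S := hw measurableSet_Ici
  have hhalf : ENNReal.ofReal (1 / 2) = (2 : ℝ≥0∞)⁻¹ := by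
    rw [one_div, ENNReal.ofReal_inv_of_pos (by norm_num)]; norm_num
  have hES : ∀ p : X × ℝ, (p.2 = 1 ∨ p.2 = -1) →
      p.2 * ∫ h, f h p.1 ∂Q ≤ 0 → p ∈ S := by
    intro p hy hE
    have hy2 : p.2 * p.2 = 1 := by rcases hy with h | h <;> rw [h] <;> norm_num
    have hid : ∀ h, f h p.1
        = p.2 * (1 - 2 * ({h | f h p.1 ≠ p.2}.indicator 1 h)) := by
      intro h
      by_cases hh : f h p.1 = p.2
      · simp [Set.indicator_apply, Set.mem_setOf_eq, hh]
      · have hfneg : f h p.1 = -p.2 := by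
          rcases hvals h p.1 with h1 | h1 <;> rcases hy with h2 | h2 <;> simp_all
        have hmem : h ∈ {h' | f h' p.1 ≠ p.2} := hh
        rw [hfneg, Set.indicator_of_mem hmem, Pi.one_apply]
        ring
    have hNm := hN p
    have hindint : Integrable ({h | f h p.1 ≠ p.2}.indicator (1 : H → ℝ)) Q :=
      (integrable_const 1).indicator hNm
    have hint : ∫ h, f h p.1 ∂Q
        = p.2 * (1 - 2 * (Q {h | f h p.1 ≠ p.2}).toReal) := by
      calc ∫ h, f h p.1 ∂Q
          = ∫ h, p.2 * (1 - 2 * ({h | f h p.1 ≠ p.2}.indicator 1 h)) ∂Q :=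
            integral_congr_ae (ae_of_all _ hid)
        _ = p.2 * (1 - 2 * (Q {h | f h p.1 ≠ p.2}).toReal) := by
            rw [integral_const_mul, integral_sub (integrable_const 1) (hindint.const_mul 2),
              integral_const_mul, integral_indicator_one hNm]
            simp [Measure.real]
    rw [hint, ← mul_assoc, hy2, one_mul] at hE
    have ht : (1 : ℝ) / 2 ≤ (Q {h | f h p.1 ≠ p.2}).toReal := by linarith
    show ENNReal.ofReal (1 / 2) ≤ w p
    rw [hwdef, ENNReal.ofReal_le_iff_le_toReal (measure_ne_top Q _)]
    exact ht
  have hnull : D {p : X × ℝ | ¬(p.2 = 1 ∨ p.2 = -1)} = 0 := ae_iff.mp hlabels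
  have hDE : D {p : X × ℝ | p.2 * ∫ h, f h p.1 ∂Q ≤ 0} ≤ D S := by
    have hsub : {p : X × ℝ | p.2 * ∫ h, f h p.1 ∂Q ≤ 0}
        ⊆ S ∪ {p : X × ℝ | ¬(p.2 = 1 ∨ p.2 = -1)} := by
      intro p hp
      by_cases hy : p.2 = 1 ∨ p.2 = -1
      · exact Or.inl (hES p hy hp)
      · exact Or.inr hy
    calc D {p : X × ℝ | p.2 * ∫ h, f h p.1 ∂Q ≤ 0}
        ≤ D (S ∪ {p : X × ℝ | ¬(p.2 = 1 ∨ p.2 = -1)}) := measure_mono hsub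
      _ ≤ D S + D {p : X × ℝ | ¬(p.2 = 1 ∨ p.2 = -1)} := measure_union_le _ _
      _ = D S := by rw [hnull, add_zero]
  have hDS : D S ≤ 4 * ∫⁻ p, (w p) ^ 2 ∂D := by
    have h1 : D S = ∫⁻ _ in S, (1 : ℝ≥0∞) ∂D := (setLIntegral_one S).symm
    have h2 : ∫⁻ _ in S, (1 : ℝ≥0∞) ∂D ≤ ∫⁻ p in S, 4 * (w p) ^ 2 ∂D := by
      refine setLIntegral_mono (by fun_prop) fun p hp => ?_
      have hp' : (2 : ℝ≥0∞)⁻¹ ≤ w p := hhalf ▸ hp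
      calc (1 : ℝ≥0∞) = 4 * ((2 : ℝ≥0∞)⁻¹) ^ 2 := by
            rw [pow_two, ← ENNReal.mul_inv (by norm_num) (by norm_num)]
            norm_num
            rw [ENNReal.mul_inv_cancel] <;> norm_num
        _ ≤ 4 * (w p) ^ 2 := by gcongr
    have h3 : ∫⁻ p in S, 4 * (w p) ^ 2 ∂D ≤ ∫⁻ p, 4 * (w p) ^ 2 ∂D :=
      setLIntegral_le_lintegral _ _
    calc D S = ∫⁻ _ in S, (1 : ℝ≥0∞) ∂D := h1
      _ ≤ ∫⁻ p in S, 4 * (w p) ^ 2 ∂D := h2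
      _ ≤ ∫⁻ p, 4 * (w p) ^ 2 ∂D := h3
      _ = 4 * ∫⁻ p, (w p) ^ 2 ∂D := lintegral_const_mul 4 (hw.pow_const 2)
  have hfin : (∫⁻ p, (w p) ^ 2 ∂D) ≤ 1 := by
    calc ∫⁻ p, (w p) ^ 2 ∂D ≤ ∫⁻ _, 1 ∂D :=
        lintegral_mono fun p => pow_le_one' prob_le_one 2
      _ = 1 := by simp
  have hne : 4 * (∫⁻ p, (w p) ^ 2 ∂D) ≠ ⊤ :=
    ENNReal.mul_ne_top (by norm_num) (lt_of_le_of_lt hfin ENNReal.one_lt_top).ne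
  have hmv : mvRisk D Q f ≤ (4 * ∫⁻ p, (w p) ^ 2 ∂D).toReal :=
    ENNReal.toReal_mono hne (le_trans hDE hDS)
  rw [hJ, hswap]
  calc mvRisk D Q f ≤ (4 * ∫⁻ p, (w p) ^ 2 ∂D).toReal := hmv
    _ = 4 * (∫⁻ p, (w p) ^ 2 ∂D).toReal := by
      rw [ENNReal.toReal_mul]; norm_num
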